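/- Let A be a vector bundle of rank at least 2 over a manifold M carrying a derivative Lie algebra structure (Γ(A), [,]) with symbol λ : Γ(A) → Γ(TM). Then λ is C^∞(M)-linear, i.e. λ_{f·a} = f·λ_a for all f ∈ C^∞(M) and a ∈ Γ(A); hence the structure is a Lie algebroid. -/
import Mathlib


/-- A derivative Lie algebra structure on (the sections of) a vector bundle of rank at
least 2 — modelled as a free module of rank ≥ 2 over `R = C^∞(M)` — has `C^∞(M)`-linear
symbol: `λ_{f·a} = f·λ_a`; hence it is a Lie algebroid. -/
theorem stmt7 (R : Type*) [CommRing R] [Algebra ℝ R]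
    (A : Type*) [AddCommGroup A] [Module ℝ A] [Module R A] [Module.Free R A]
    (hrank : 2 ≤ Module.rank R A)
    (br : A → A → A)
    (hanti : ∀ a b, br a b = - br b a)
    (hjac : ∀ a b c, br a (br b c) + br b (br c a) + br c (br a b) = 0)
    (hadd : ∀ a b c, br (a + b) c = br a c + br b c)
    (hsmul : ∀ (r : ℝ) (a b : A), br (r • a) b = r • br a b)
    (lam : A → Derivation ℝ R R)
    (hleib : ∀ (a : A) (f : R) (b : A), br a (f • b) = f • br a b + lam a f • b)
    (Lam : R → A → Derivation ℝ R R)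
    (hsymb : ∀ (f : R) (a : A) (g : R), lam (f • a) g = f * lam a g + Lam f a g) :
    ∀ (f : R) (a : A) (g : R), lam (f • a) g = f * lam a g := by
  have aux : ∀ (f : R) (a b : A), br (f • a) b = f • br a b - lam b f • a := by
    intro f a b
    rw [hanti, hleib b f a, hanti b a]
    module
  have key : ∀ (f g : R) (a b : A), Lam f a g • b = -(Lam g b f • a) := by
    intro f g a b
    have h1 : br (f • a) (g • b) = g • br (f • a) b + lam (f • a) g • b := hleib _ _ _
    rw [aux f a b, aux f a (g • b), hleib a g b, hsymb f a g, hsymb g b f] at h1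
    have h2 : g • f = f • g := mul_comm g f
    linear_combination (norm := module) -h1
  intro f a g
  rcases subsingleton_or_nontrivial R with hR | hR
  · exact Subsingleton.elim _ _
  have hZ : Lam f a g = 0 := by
    set bas := Module.Free.chooseBasis R A with hbas
    have hcard : 2 ≤ Cardinal.mk (Module.Free.ChooseBasisIndex R A) := by
      rwa [← Module.Free.rank_eq_card_chooseBasisIndex]
    obtain ⟨i, j, hij⟩ := Cardinal.two_le_iff.mp hcard
    have hi0 : Lam g (bas i) f = 0 := by
      have h := key f g (bas j) (bas i)
      have h' := congrArg (fun x => bas.repr x j) h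
      simpa [Module.Basis.repr_self, Finsupp.single_apply, hij, Ne.symm hij] using h'
    have h := key f g a (bas i)
    have h' := congrArg (fun x => bas.repr x i) h
    simpa [Module.Basis.repr_self, Finsupp.single_apply, hi0] using h'
  rw [hsymb, hZ]
  simp
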